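/- Let f : S¹ × ℝ → ℝⁿ be a C² conformal immersion of the cylinder with ∫_{S¹×ℝ}|A_f|² dμ_f < ∞, and suppose that the limits κ⁺ := lim_{t→+∞} ∫_{S¹×{t}} κ_f ds_f and κ⁻ := lim_{t→−∞} ∫_{S¹×{t}} κ_f ds_f exist and equal 2m⁺π and 2m⁻π respectively for integers m⁺, m⁻. If for every t one has ∫_{S¹×{t}} κ_f ds_f ≠ 2mπ + π for all integers m (i.e., f is a trivial bubble), then ∫_{S¹×ℝ} K_f dμ_f = 0. -/

import Mathlib

open MeasureTheory Real Filter

noncomputable section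

/-- Laplacian of a function on `ℝ²`. -/
def lap (φ : ℝ × ℝ → ℝ) (p : ℝ × ℝ) : ℝ :=
  fderiv ℝ (fun q => fderiv ℝ φ q (1, 0)) p (1, 0) +
  fderiv ℝ (fun q => fderiv ℝ φ q (0, 1)) p (0, 1)

variable {n : ℕ}

def d1 (f : ℝ × ℝ → EuclideanSpace ℝ (Fin n)) (p : ℝ × ℝ) : EuclideanSpace ℝ (Fin n) :=
  fderiv ℝ f p (1, 0)

def d2 (f : ℝ × ℝ → EuclideanSpace ℝ (Fin n)) (p : ℝ × ℝ) : EuclideanSpace ℝ (Fin n) :=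
  fderiv ℝ f p (0, 1)

def dd (f : ℝ × ℝ → EuclideanSpace ℝ (Fin n)) (v w p : ℝ × ℝ) : EuclideanSpace ℝ (Fin n) :=
  fderiv ℝ (fun q => fderiv ℝ f q v) p w

/-- `f` is a conformal immersion with conformal factor `e^{2u}` at `p`. -/
def IsConformalFactorAt (f : ℝ × ℝ → EuclideanSpace ℝ (Fin n)) (u : ℝ × ℝ → ℝ)
    (p : ℝ × ℝ) : Prop :=
  (inner ℝ (d1 f p) (d2 f p) : ℝ) = 0 ∧
  ‖d1 f p‖ ^ 2 = Real.exp (2 * u p) ∧ ‖d2 f p‖ ^ 2 = Real.exp (2 * u p)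

/-- Second fundamental form (normal part of the second derivative). -/
def sff (f : ℝ × ℝ → EuclideanSpace ℝ (Fin n)) (u : ℝ × ℝ → ℝ) (v w p : ℝ × ℝ) :
    EuclideanSpace ℝ (Fin n) :=
  dd f v w p - Real.exp (-(2 * u p)) •
    ((inner ℝ (dd f v w p) (d1 f p) : ℝ) • d1 f p + (inner ℝ (dd f v w p) (d2 f p) : ℝ) • d2 f p)

/-- `|A_f|²` w.r.t. the induced metric `e^{2u}δ`. -/
def normAsq (f : ℝ × ℝ → EuclideanSpace ℝ (Fin n)) (u : ℝ × ℝ → ℝ) (p : ℝ × ℝ) : ℝ :=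
  Real.exp (-(4 * u p)) * (‖sff f u (1, 0) (1, 0) p‖ ^ 2 + 2 * ‖sff f u (1, 0) (0, 1) p‖ ^ 2 +
    ‖sff f u (0, 1) (0, 1) p‖ ^ 2)

/-- Gauss curvature of the conformal metric `e^{2u}δ`. -/
def gaussK (u : ℝ × ℝ → ℝ) (p : ℝ × ℝ) : ℝ := -Real.exp (-(2 * u p)) * lap u p

/-- Total geodesic curvature `∫_{S¹×{t}} κ_f ds_f` of the circle at height `t`
of a conformal immersion of the cylinder (`S¹` of perimeter 1, points `(θ,t)`):
`κ_f ds_f = (∂u/∂t) dθ`. -/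
def kgTotal (u : ℝ × ℝ → ℝ) (t : ℝ) : ℝ :=
  ∫ θ in (0:ℝ)..1, fderiv ℝ u (θ, t) (0, 1)

/-- The cylinder `S¹ × I`, modelled as `(0,1] × I ⊆ ℝ²`. -/
def cyl (I : Set ℝ) : Set (ℝ × ℝ) := Set.Ioc (0:ℝ) 1 ×ˢ I

/-! ### Auxiliary lemmas -/

lemma sliceDeriv1 {x y : ℝ} (g : ℝ × ℝ → ℝ) (hg : DifferentiableAt ℝ g (x, y)) :
    HasDerivAt (fun s => g (s, y)) (fderiv ℝ g (x, y) (1, 0)) x := by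
  have h := hg.hasFDerivAt.comp_hasDerivAt x ((hasDerivAt_id x).prodMk (hasDerivAt_const x y))
  simp at h; exact h

lemma sliceDeriv2 {x y : ℝ} (g : ℝ × ℝ → ℝ) (hg : DifferentiableAt ℝ g (x, y)) :
    HasDerivAt (fun s => g (x, s)) (fderiv ℝ g (x, y) (0, 1)) y := by
  have h := hg.hasFDerivAt.comp_hasDerivAt y ((hasDerivAt_const y x).prodMk (hasDerivAt_id y))
  exact h

lemma fderivPer (u : ℝ × ℝ → ℝ) (hu : Differentiable ℝ u)
    (huper : ∀ θ t, u (θ + 1, t) = u (θ, t)) (θ t : ℝ) :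
    fderiv ℝ u (θ + 1, t) = fderiv ℝ u (θ, t) := by
  have hT : HasFDerivAt (fun q : ℝ × ℝ => q + ((1:ℝ), (0:ℝ)))
      (ContinuousLinearMap.id ℝ (ℝ × ℝ)) (θ, t) := (hasFDerivAt_id _).add_const _
  have hcomp := ((hu ((θ, t) + (1, 0))).hasFDerivAt).comp (θ, t) hT
  have heq : (fun q : ℝ × ℝ => u (q + (1, 0))) = u := by
    funext q
    cases q with
    | mk a b => simp [Prod.mk_add_mk, huper]
  rw [show (u ∘ fun q : ℝ × ℝ => q + (1, 0)) = u from heq] at hcomp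
  have := hcomp.fderiv
  simp only [ContinuousLinearMap.comp_id] at this
  rw [this]
  norm_num [Prod.mk_add_mk]

lemma cd1 (u : ℝ × ℝ → ℝ) (hu : ContDiff ℝ 2 u) (v : ℝ × ℝ) :
    ContDiff ℝ 1 (fun p => fderiv ℝ u p v) :=
  (hu.fderiv_right (le_refl _)).clm_apply contDiff_const

lemma cd2 (u : ℝ × ℝ → ℝ) (hu : ContDiff ℝ 2 u) (v w : ℝ × ℝ) :
    Continuous (fun p => fderiv ℝ (fun q => fderiv ℝ u q v) p w) :=
  ((((cd1 u hu v).fderiv_right (m := 0) (by norm_num)).clm_apply contDiff_const).continuous)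

/-- The fundamental rectangle identity: the integral of `lap u` over a horizontal
strip `S¹ × [a,b]` equals the difference of total geodesic curvatures. -/
lemma strip_integral (u : ℝ × ℝ → ℝ) (hu : ContDiff ℝ 2 u)
    (huper : ∀ θ t, u (θ + 1, t) = u (θ, t)) {a b : ℝ} (hab : a ≤ b) :
    ∫ t in a..b, (∫ θ in Set.Ioc (0:ℝ) 1, lap u (θ, t)) = kgTotal u b - kgTotal u a := by
  have hudiff : Differentiable ℝ u := hu.differentiable (by norm_num)
  have hc11 : Continuous fun p : ℝ × ℝ => fderiv ℝ (fun q => fderiv ℝ u q (1, 0)) p (1, 0) :=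
    cd2 u hu _ _
  have hc22 : Continuous fun p : ℝ × ℝ => fderiv ℝ (fun q => fderiv ℝ u q (0, 1)) p (0, 1) :=
    cd2 u hu _ _
  -- the θ-integral of ∂₁₁ u vanishes by periodicity
  have h11 : ∀ t : ℝ, (∫ θ in Set.Ioc (0:ℝ) 1,
      fderiv ℝ (fun q => fderiv ℝ u q (1, 0)) (θ, t) (1, 0)) = 0 := by
    intro t
    rw [← intervalIntegral.integral_of_le (zero_le_one)]
    have hftc : ∀ θ ∈ Set.uIcc (0:ℝ) 1,
        HasDerivAt (fun s => fderiv ℝ u (s, t) (1, 0))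
          (fderiv ℝ (fun q => fderiv ℝ u q (1, 0)) (θ, t) (1, 0)) θ := by
      intro θ _
      exact sliceDeriv1 (fun q => fderiv ℝ u q (1, 0))
        ((cd1 u hu (1, 0)).differentiable one_ne_zero (θ, t))
    rw [intervalIntegral.integral_eq_sub_of_hasDerivAt hftc
      ((hc11.comp (by fun_prop)).intervalIntegrable 0 1)]
    rw [show ((1:ℝ), t) = ((0:ℝ) + 1, t) by norm_num, fderivPer u hudiff huper 0 t, sub_self]
  -- FTC for the t-integral of ∂₂₂ u
  have h22 : ∀ θ : ℝ, (∫ t in Set.Ioc a b,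
      fderiv ℝ (fun q => fderiv ℝ u q (0, 1)) (θ, t) (0, 1))
      = fderiv ℝ u (θ, b) (0, 1) - fderiv ℝ u (θ, a) (0, 1) := by
    intro θ
    rw [← intervalIntegral.integral_of_le hab]
    have hftc : ∀ t ∈ Set.uIcc a b,
        HasDerivAt (fun s => fderiv ℝ u (θ, s) (0, 1))
          (fderiv ℝ (fun q => fderiv ℝ u q (0, 1)) (θ, t) (0, 1)) t := by
      intro t _
      exact sliceDeriv2 (fun q => fderiv ℝ u q (0, 1))
        ((cd1 u hu (0, 1)).differentiable one_ne_zero (θ, t))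
    rw [intervalIntegral.integral_eq_sub_of_hasDerivAt hftc
      ((hc22.comp (by fun_prop)).intervalIntegrable a b)]
  -- integrability of the pieces on the rectangle
  have hrect : ∀ g : ℝ × ℝ → ℝ, Continuous g →
      Integrable g ((volume.restrict (Set.Ioc (0:ℝ) 1)).prod (volume.restrict (Set.Ioc a b))) := by
    intro g hg
    rw [Measure.prod_restrict]
    exact ((hg.continuousOn.integrableOn_compact (isCompact_Icc.prod isCompact_Icc)).mono_set
      (Set.prod_mono Set.Ioc_subset_Icc_self Set.Ioc_subset_Icc_self))
  -- split and compute
  rw [intervalIntegral.integral_of_le hab]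
  have hsplit : ∀ t : ℝ, (∫ θ in Set.Ioc (0:ℝ) 1, lap u (θ, t))
      = (∫ θ in Set.Ioc (0:ℝ) 1, fderiv ℝ (fun q => fderiv ℝ u q (1, 0)) (θ, t) (1, 0))
      + (∫ θ in Set.Ioc (0:ℝ) 1, fderiv ℝ (fun q => fderiv ℝ u q (0, 1)) (θ, t) (0, 1)) := by
    intro t
    rw [← integral_add]
    · rfl
    · exact (hc11.comp (by fun_prop : Continuous fun θ : ℝ => ((θ, t) : ℝ × ℝ))).integrableOn_Ioc
    · exact (hc22.comp (by fun_prop : Continuous fun θ : ℝ => ((θ, t) : ℝ × ℝ))).integrableOn_Ioc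
  calc ∫ t in Set.Ioc a b, (∫ θ in Set.Ioc (0:ℝ) 1, lap u (θ, t))
      = ∫ t in Set.Ioc a b, (∫ θ in Set.Ioc (0:ℝ) 1,
          fderiv ℝ (fun q => fderiv ℝ u q (0, 1)) (θ, t) (0, 1)) := by
        refine integral_congr_ae (ae_of_all _ fun t => ?_)
        show (∫ θ in Set.Ioc (0:ℝ) 1, lap u (θ, t)) = _
        rw [hsplit t, h11 t, zero_add]
    _ = ∫ θ in Set.Ioc (0:ℝ) 1, (∫ t in Set.Ioc a b,
          fderiv ℝ (fun q => fderiv ℝ u q (0, 1)) (θ, t) (0, 1)) := by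
        exact (MeasureTheory.integral_integral_swap
          (f := fun θ t => fderiv ℝ (fun q => fderiv ℝ u q (0, 1)) (θ, t) (0, 1))
          (hrect _ (hc22.comp continuous_id))).symm
    _ = ∫ θ in Set.Ioc (0:ℝ) 1,
          (fderiv ℝ u (θ, b) (0, 1) - fderiv ℝ u (θ, a) (0, 1)) := by
        exact integral_congr_ae (ae_of_all _ fun θ => h22 θ)
    _ = kgTotal u b - kgTotal u a := by
        rw [integral_sub]
        · unfold kgTotal
          rw [intervalIntegral.integral_of_le (zero_le_one),
            intervalIntegral.integral_of_le (zero_le_one)]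
        · exact (((cd1 u hu (0,1)).continuous).comp
            (by fun_prop : Continuous fun θ : ℝ => ((θ, b) : ℝ × ℝ))).integrableOn_Ioc
        · exact (((cd1 u hu (0,1)).continuous).comp
            (by fun_prop : Continuous fun θ : ℝ => ((θ, a) : ℝ × ℝ))).integrableOn_Ioc

theorem stmt8 (f : ℝ × ℝ → EuclideanSpace ℝ (Fin n)) (u : ℝ × ℝ → ℝ) (mp mm : ℤ)
    (hf : ContDiff ℝ 2 f) (hu : ContDiff ℝ 2 u)
    (hperiodic : ∀ θ t, f (θ + 1, t) = f (θ, t))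
    (huper : ∀ θ t, u (θ + 1, t) = u (θ, t))
    (hconf : ∀ p, IsConformalFactorAt f u p)
    (hA : IntegrableOn (fun p => normAsq f u p * Real.exp (2 * u p)) (cyl Set.univ))
    (hK : IntegrableOn (fun p => gaussK u p * Real.exp (2 * u p)) (cyl Set.univ))
    (htop : Tendsto (kgTotal u) atTop (nhds (2 * mp * π)))
    (hbot : Tendsto (kgTotal u) atBot (nhds (2 * mm * π)))
    (htrivial : ∀ t : ℝ, ∀ m : ℤ, kgTotal u t ≠ 2 * m * π + π) :
    ∫ p in cyl Set.univ, gaussK u p * Real.exp (2 * u p) = 0 := by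
  classical
  -- the integrand is `-Δu`
  have hFeq : (fun p : ℝ × ℝ => gaussK u p * Real.exp (2 * u p)) = fun p => -(lap u p) := by
    funext p
    have h := Real.exp_ne_zero (2 * u p)
    simp only [gaussK, Real.exp_neg]
    field_simp
  rw [hFeq] at hK ⊢
  -- measure bookkeeping
  have hmeas : (volume : Measure (ℝ × ℝ)).restrict (cyl Set.univ)
      = (volume.restrict (Set.Ioc (0:ℝ) 1)).prod volume := by
    rw [cyl, Measure.volume_eq_prod, ← Measure.restrict_prod_eq_prod_univ]
  have hKint : Integrable (fun p : ℝ × ℝ => -(lap u p))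
      ((volume.restrict (Set.Ioc (0:ℝ) 1)).prod volume) := by
    rw [IntegrableOn, hmeas] at hK; exact hK
  set H : ℝ → ℝ := fun t => ∫ θ in Set.Ioc (0:ℝ) 1, lap u (θ, t) with hHdef
  have hHint : Integrable H volume := by
    have h := hKint.integral_prod_right
    have h' : (fun t => ∫ θ in Set.Ioc (0:ℝ) 1, -(lap u (θ, t))) = fun t => -(H t) := by
      funext t; rw [integral_neg]
    rw [h'] at h
    exact integrable_neg_iff.1 h
  -- continuity of kgTotal
  have hkgc : Continuous (kgTotal u) := by
    have hc : Continuous (Function.uncurry fun (t θ : ℝ) => fderiv ℝ u (θ, t) (0, 1)) := by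
      have h1 := (cd1 u hu (0, 1)).continuous
      exact h1.comp continuous_swap
    exact intervalIntegral.continuous_parametric_intervalIntegral_of_continuous' hc 0 1
  -- m⁺ = m⁻
  have hmm : mp = mm := by
    by_contra hne
    have hipi : ∀ c : ℝ, (∃ x, kgTotal u x < c) → (∃ y, c < kgTotal u y) →
        (∃ m : ℤ, c = 2 * m * π + π) → False := by
      rintro c ⟨x, hx⟩ ⟨y, hy⟩ ⟨m, rfl⟩
      have hmem : (2 * (m:ℝ) * π + π) ∈ Set.uIcc (kgTotal u x) (kgTotal u y) :=
        Set.mem_uIcc.2 (Or.inl ⟨hx.le, hy.le⟩)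
      obtain ⟨t, _, ht⟩ := intermediate_value_uIcc (hkgc.continuousOn (s := Set.uIcc x y)) hmem
      exact htrivial t m ht
    rcases lt_or_gt_of_ne hne with hlt | hlt
    · -- mp < mm : take c = 2 mp π + π, small near +∞, large near -∞
      have hc1 : 2 * (mp:ℝ) * π < 2 * mp * π + π := by nlinarith [Real.pi_pos]
      have hc2 : 2 * (mp:ℝ) * π + π < 2 * mm * π := by
        have : (mp:ℝ) + 1 ≤ mm := by exact_mod_cast hlt
        nlinarith [Real.pi_pos]
      obtain ⟨x, hx⟩ := (htop.eventually_lt_const hc1).exists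
      obtain ⟨y, hy⟩ := (hbot.eventually_const_lt hc2).exists
      exact hipi _ ⟨x, hx⟩ ⟨y, hy⟩ ⟨mp, rfl⟩
    · -- mm < mp
      have hc1 : 2 * (mm:ℝ) * π < 2 * mm * π + π := by nlinarith [Real.pi_pos]
      have hc2 : 2 * (mm:ℝ) * π + π < 2 * mp * π := by
        have : (mm:ℝ) + 1 ≤ mp := by exact_mod_cast hlt
        nlinarith [Real.pi_pos]
      obtain ⟨x, hx⟩ := (hbot.eventually_lt_const hc1).exists
      obtain ⟨y, hy⟩ := (htop.eventually_const_lt hc2).exists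
      exact hipi _ ⟨x, hx⟩ ⟨y, hy⟩ ⟨mm, rfl⟩
  -- compute ∫ H via improper interval integrals
  have htend1 : Tendsto (fun r : ℝ => ∫ t in (-r)..r, H t) atTop (nhds (∫ t, H t)) :=
    intervalIntegral_tendsto_integral hHint tendsto_neg_atTop_atBot tendsto_id
  have htend2 : Tendsto (fun r : ℝ => ∫ t in (-r)..r, H t) atTop
      (nhds (2 * mp * π - 2 * mm * π)) := by
    have heq : ∀ᶠ r : ℝ in atTop,
        (fun r => kgTotal u r - kgTotal u (-r)) r = (∫ t in (-r)..r, H t) := by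
      filter_upwards [eventually_ge_atTop (0:ℝ)] with r hr
      exact (strip_integral u hu huper (by linarith)).symm
    exact Tendsto.congr' heq
      ((htop.comp tendsto_id).sub (hbot.comp tendsto_neg_atTop_atBot))
  have hHval : (∫ t, H t) = 2 * mp * π - 2 * mm * π := tendsto_nhds_unique htend1 htend2
  -- conclude
  calc ∫ p in cyl Set.univ, -(lap u p)
      = ∫ p, -(lap u p) ∂((volume.restrict (Set.Ioc (0:ℝ) 1)).prod volume) := by rw [← hmeas]
    _ = ∫ t, (∫ θ in Set.Ioc (0:ℝ) 1, -(lap u (θ, t))) := integral_prod_symm _ hKint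
    _ = ∫ t, -(H t) := integral_congr_ae (ae_of_all _ fun t => integral_neg _)
    _ = - ∫ t, H t := integral_neg _
    _ = 0 := by rw [hHval, hmm, sub_self, neg_zero]
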